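/- Fix γ_acc ∈ (0,1) and r_n < 0. For every ε > 0 there exists γ' ∈ (0,1) such that for every γ ∈ (γ', 1), every state s ∈ S, and every policy π: 0 ≤ V^γ_π(s) − r_n·μ^π_s(Safeᶜ) < ε, where V^γ_π denotes the value of π computed with discount parameter γ (the measure μ^π_s does not depend on γ). -/

import Mathlib

open MeasureTheory Set
open scoped ENNReal Classical

variable {S : Type*}

def IsPathMeasure [MeasurableSpace S] (P : S → PMF S) (μ : S → Measure (ℕ → S)) : Prop :=
  (∀ s, IsProbabilityMeasure (μ s)) ∧
    ∀ (s : S) (n : ℕ) (x : ℕ → S),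
      μ s {ω | ∀ i ≤ n, ω i = x i} =
        (if x 0 = s then 1 else 0) * ∏ i ∈ Finset.range n, (P (x i)) (x (i + 1))

noncomputable def Rw (Acc : Set S) (γacc rn : ℝ) (s : S) : ℝ :=
  if s ∈ Acc then (1 - γacc) * rn else 0

noncomputable def Γw (Acc : Set S) (γacc γ : ℝ) (s : S) : ℝ :=
  if s ∈ Acc then γacc else γ

noncomputable def Ret (Acc : Set S) (γacc γ rn : ℝ) (ω : ℕ → S) : ℝ :=
  ∑' t : ℕ, Rw Acc γacc rn (ω (t + 1)) * ∏ k ∈ Finset.range t, Γw Acc γacc γ (ω (k + 1))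

noncomputable def Val [MeasurableSpace S] (Acc : Set S) (γacc γ rn : ℝ)
    (μ : S → Measure (ℕ → S)) (s : S) : ℝ :=
  ∫ ω, Ret Acc γacc γ rn ω ∂ (μ s)

variable {A : S → Type*}

noncomputable def Valp [MeasurableSpace S] (Acc : Set S) (γacc γ rn : ℝ)
    (μ : ((s : S) → A s) → S → Measure (ℕ → S)) (π : (s : S) → A s) (s : S) : ℝ :=
  ∫ ω, Ret Acc γacc γ rn ω ∂ (μ π s)

noncomputable def Qp [MeasurableSpace S] [Fintype S]
    (P : (s : S) → A s → PMF S) (Acc : Set S) (γacc γ rn : ℝ)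
    (μ : ((s : S) → A s) → S → Measure (ℕ → S)) (π : (s : S) → A s) (s : S) (a : A s) : ℝ :=
  ∑ s' : S, (P s a s').toReal *
    (Rw Acc γacc rn s' + Γw Acc γacc γ s' * Valp Acc γacc γ rn μ π s')

noncomputable def Qstar [MeasurableSpace S] [Fintype S]
    (P : (s : S) → A s → PMF S) (Acc : Set S) (γacc γ rn : ℝ)
    (μ : ((s : S) → A s) → S → Measure (ℕ → S)) (s : S) (a : A s) : ℝ :=
  ⨆ π : (s' : S) → A s', Qp P Acc γacc γ rn μ π s a

def WinRegion [MeasurableSpace S] (Acc : Set S)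
    (μ : ((s : S) → A s) → S → Measure (ℕ → S)) : Set S :=
  {s | ∃ π : (s' : S) → A s', μ π s {ω | ∀ t, ω t ∉ Acc} = 1}

def IsOptimal [MeasurableSpace S] (Acc : Set S) (γacc γ rn : ℝ)
    (μ : ((s : S) → A s) → S → Measure (ℕ → S)) (πo : (s : S) → A s) : Prop :=
  ∀ s, Valp Acc γacc γ rn μ πo s = ⨆ π : (s' : S) → A s', Valp Acc γacc γ rn μ π s

section Helpers

variable {Acc : Set S} {γacc γ rn : ℝ}

lemma norm_retTerm_le (hacc0 : 0 ≤ γacc) (hacc1 : γacc ≤ 1) (hγ0 : 0 ≤ γ) (ω : ℕ → S) (t : ℕ) :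
    ‖Rw Acc γacc rn (ω (t + 1)) * ∏ k ∈ Finset.range t, Γw Acc γacc γ (ω (k + 1))‖ ≤
      ((1 - γacc) * |rn|) * max γ γacc ^ t := by
  rw [norm_mul]
  have h1' : ‖Rw Acc γacc rn (ω (t + 1))‖ ≤ (1 - γacc) * |rn| := by
    rw [Rw]; split_ifs with h
    · rw [Real.norm_eq_abs, abs_mul, abs_of_nonneg (by linarith : (0:ℝ) ≤ 1 - γacc)]
    · rw [norm_zero]
      exact mul_nonneg (by linarith) (abs_nonneg rn)
  have h2 : ‖∏ k ∈ Finset.range t, Γw Acc γacc γ (ω (k + 1))‖ ≤ max γ γacc ^ t := by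
    rw [Real.norm_eq_abs, Finset.abs_prod]
    calc ∏ k ∈ Finset.range t, |Γw Acc γacc γ (ω (k + 1))|
        ≤ ∏ _k ∈ Finset.range t, max γ γacc := by
          refine Finset.prod_le_prod (fun _ _ => abs_nonneg _) (fun k _ => ?_)
          unfold Γw; split_ifs
          · rw [abs_of_nonneg hacc0]; exact le_max_right _ _
          · rw [abs_of_nonneg hγ0]; exact le_max_left _ _
      _ = max γ γacc ^ t := by rw [Finset.prod_const, Finset.card_range]
  exact mul_le_mul h1' h2 (norm_nonneg _)
    (mul_nonneg (by linarith) (abs_nonneg rn))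

lemma summable_retTerm (hacc0 : 0 ≤ γacc) (hacc1 : γacc < 1) (hγ0 : 0 ≤ γ) (hγ1 : γ < 1)
    (ω : ℕ → S) :
    Summable (fun t =>
      Rw Acc γacc rn (ω (t + 1)) * ∏ k ∈ Finset.range t, Γw Acc γacc γ (ω (k + 1))) := by
  refine Summable.of_norm_bounded
    (Summable.mul_left _ (summable_geometric_of_lt_one (le_max_of_le_right hacc0)
      (max_lt hγ1 hacc1))) (norm_retTerm_le hacc0 hacc1.le hγ0 ω)

lemma norm_Ret_le (hacc0 : 0 ≤ γacc) (hacc1 : γacc < 1) (hγ0 : 0 ≤ γ) (hγ1 : γ < 1)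
    (ω : ℕ → S) :
    ‖Ret Acc γacc γ rn ω‖ ≤ ((1 - γacc) * |rn|) * (1 - max γ γacc)⁻¹ := by
  have hsumg : Summable (fun t : ℕ => ((1 - γacc) * |rn|) * max γ γacc ^ t) :=
    Summable.mul_left _ (summable_geometric_of_lt_one (le_max_of_le_right hacc0)
      (max_lt hγ1 hacc1))
  have hsnorm : Summable (fun t : ℕ => ‖Rw Acc γacc rn (ω (t + 1)) *
      ∏ k ∈ Finset.range t, Γw Acc γacc γ (ω (k + 1))‖) :=
    Summable.of_nonneg_of_le (fun _ => norm_nonneg _) (norm_retTerm_le hacc0 hacc1.le hγ0 ω) hsumg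
  calc ‖Ret Acc γacc γ rn ω‖
      ≤ ∑' t : ℕ, ‖Rw Acc γacc rn (ω (t + 1)) *
          ∏ k ∈ Finset.range t, Γw Acc γacc γ (ω (k + 1))‖ := norm_tsum_le_tsum_norm hsnorm
    _ ≤ ∑' t : ℕ, ((1 - γacc) * |rn|) * max γ γacc ^ t :=
        Summable.tsum_le_tsum (norm_retTerm_le hacc0 hacc1.le hγ0 ω) hsnorm hsumg
    _ = ((1 - γacc) * |rn|) * (1 - max γ γacc)⁻¹ := by
        rw [tsum_mul_left, tsum_geometric_of_lt_one (le_max_of_le_right hacc0)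
          (max_lt hγ1 hacc1)]

lemma measurable_Ret [MeasurableSpace S] [MeasurableSingletonClass S] [Countable S]
    (hacc0 : 0 ≤ γacc) (hacc1 : γacc < 1) (hγ0 : 0 ≤ γ) (hγ1 : γ < 1) :
    Measurable (Ret Acc γacc γ rn (S := S)) := by
  have hmeas : ∀ n : ℕ, Measurable (fun ω : ℕ → S =>
      ∑ t ∈ Finset.range n,
        Rw Acc γacc rn (ω (t + 1)) * ∏ k ∈ Finset.range t, Γw Acc γacc γ (ω (k + 1))) := by
    intro n
    apply Finset.measurable_sum
    intro t _
    apply Measurable.mul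
    · exact (measurable_of_countable (fun x : S => Rw Acc γacc rn x)).comp
        (measurable_pi_apply (t + 1))
    · apply Finset.measurable_prod
      intro k _
      exact (measurable_of_countable (fun x : S => Γw Acc γacc γ x)).comp
        (measurable_pi_apply (k + 1))
  refine measurable_of_tendsto_metrizable hmeas ?_
  rw [tendsto_pi_nhds]
  intro ω
  exact (summable_retTerm hacc0 hacc1 hγ0 hγ1 ω).hasSum.tendsto_sum_nat

/-- On a "good" path that never meets `Acc` at positive times before being absorbed,
the return vanishes when the path is safe. -/
lemma Ret_eq_zero_of_safe {ω : ℕ → S} (hsafe : ∀ t, ω t ∉ Acc) :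
    Ret Acc γacc γ rn ω = 0 := by
  unfold Ret
  have : ∀ t : ℕ, Rw Acc γacc rn (ω (t + 1)) *
      ∏ k ∈ Finset.range t, Γw Acc γacc γ (ω (k + 1)) = 0 := by
    intro t
    rw [Rw, if_neg (hsafe (t + 1)), zero_mul]
  simp [this]

lemma Ret_eq_of_unsafe (hacc0 : 0 < γacc) (hacc1 : γacc < 1) (hγ0 : 0 ≤ γ) (hγ1 : γ < 1)
    {ω : ℕ → S} (hgood : ∀ k, ω k ∈ Acc → ω (k + 1) ∈ Acc) (h : ∃ t, ω (t + 1) ∈ Acc) :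
    Ret Acc γacc γ rn ω = rn * γ ^ (Nat.find h) := by
  set T := Nat.find h with hTdef
  have hT : ω (T + 1) ∈ Acc := Nat.find_spec h
  have hlt : ∀ t < T, ω (t + 1) ∉ Acc := fun t ht => Nat.find_min h ht
  have hge : ∀ i : ℕ, ω (T + i + 1) ∈ Acc := by
    intro i
    induction i with
    | zero => exact hT
    | succ n ih => exact hgood _ ih
  set f : ℕ → ℝ := fun t =>
    Rw Acc γacc rn (ω (t + 1)) * ∏ k ∈ Finset.range t, Γw Acc γacc γ (ω (k + 1)) with hf
  have hsum : Summable f := summable_retTerm hacc0.le hacc1 hγ0 hγ1 ω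
  have key : ∀ i : ℕ, f (i + T) = ((1 - γacc) * rn * γ ^ T) * γacc ^ i := by
    intro i
    have h1 : Rw Acc γacc rn (ω (i + T + 1)) = (1 - γacc) * rn := by
      rw [Rw, if_pos]
      have := hge i
      rwa [show T + i + 1 = i + T + 1 by ring] at this
    have h2 : ∏ k ∈ Finset.range (i + T), Γw Acc γacc γ (ω (k + 1)) = γ ^ T * γacc ^ i := by
      rw [show i + T = T + i by ring, Finset.prod_range_add]
      congr 1
      · calc ∏ k ∈ Finset.range T, Γw Acc γacc γ (ω (k + 1))
            = ∏ _k ∈ Finset.range T, γ := Finset.prod_congr rfl (fun k hk => by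
              rw [Γw, if_neg (hlt k (Finset.mem_range.mp hk))])
          _ = γ ^ T := by rw [Finset.prod_const, Finset.card_range]
      · calc ∏ k ∈ Finset.range i, Γw Acc γacc γ (ω (T + k + 1))
            = ∏ _k ∈ Finset.range i, γacc := Finset.prod_congr rfl (fun k _ => by
              rw [Γw, if_pos (hge k)])
          _ = γacc ^ i := by rw [Finset.prod_const, Finset.card_range]
    rw [hf]; simp only [h1, h2]; ring
  have hzero : ∀ t ∈ Finset.range T, f t = 0 := by
    intro t ht
    rw [hf]; simp only
    rw [Rw, if_neg (hlt t (Finset.mem_range.mp ht)), zero_mul]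
  have := Summable.sum_add_tsum_nat_add (f := f) T hsum
  rw [Finset.sum_eq_zero hzero, zero_add] at this
  have htsum : ∑' i : ℕ, f (i + T) = ((1 - γacc) * rn * γ ^ T) * (1 - γacc)⁻¹ := by
    rw [tsum_congr key, tsum_mul_left, tsum_geometric_of_lt_one hacc0.le hacc1]
  have hRet : Ret Acc γacc γ rn ω = ∑' i : ℕ, f (i + T) := by
    rw [Ret, ← this]
  rw [hRet, htsum]
  have hne : (1 : ℝ) - γacc ≠ 0 := by linarith
  field_simp

end Helpers

section NullBad

variable {A : S → Type*}

lemma bad_null [MeasurableSpace S] [Nonempty S] [Countable S]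
    (P : (s : S) → A s → PMF S) (Acc : Set S)
    (habs : ∀ s ∈ Acc, ∀ a : A s, (P s a).support ⊆ Acc)
    (μ : ((s : S) → A s) → S → Measure (ℕ → S))
    (hμ : ∀ π : (s : S) → A s, IsPathMeasure (fun s => P s (π s)) (μ π))
    (π : (s : S) → A s) (s : S) :
    μ π s {ω | ∃ k, ω k ∈ Acc ∧ ω (k + 1) ∉ Acc} = 0 := by
  classical
  set B : (k : ℕ) → (ℕ → S) → Set (ℕ → S) := fun k v =>
    {ω | ω k ∈ Acc ∧ ω (k + 1) ∉ Acc ∧ ∀ i ≤ k + 1, ω i = v i} with hB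
  have key : ∀ (k : ℕ) (v : ℕ → S), μ π s (B k v) = 0 := by
    intro k v
    rcases Set.eq_empty_or_nonempty (B k v) with he | ⟨ω0, hω0⟩
    · simp [he]
    · have hsub : B k v ⊆ {ω | ∀ i ≤ k + 1, ω i = v i} := fun ω hω => hω.2.2
      refine measure_mono_null hsub ?_
      rw [(hμ π).2 s (k + 1) v]
      have hvk : v k ∈ Acc := by
        rw [← hω0.2.2 k (by omega)]; exact hω0.1
      have hvk1 : v (k + 1) ∉ Acc := by
        rw [← hω0.2.2 (k + 1) le_rfl]; exact hω0.2.1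
      have hzero : (P (v k) (π (v k))) (v (k + 1)) = 0 := by
        by_contra hne
        exact hvk1 (habs (v k) hvk (π (v k)) (by
          rw [PMF.mem_support_iff]; exact hne))
      rw [Finset.prod_eq_zero (Finset.mem_range.mpr (by omega)) hzero, mul_zero]
  have hsub : {ω : ℕ → S | ∃ k, ω k ∈ Acc ∧ ω (k + 1) ∉ Acc} ⊆
      ⋃ (k : ℕ), ⋃ (v : Fin (k + 2) → S),
        B k (fun i => if h : i < k + 2 then v ⟨i, h⟩ else Classical.arbitrary S) := by
    intro ω hω
    obtain ⟨k, hk1, hk2⟩ := hω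
    refine Set.mem_iUnion.mpr ⟨k, Set.mem_iUnion.mpr ⟨fun i => ω i, ?_⟩⟩
    refine ⟨hk1, hk2, fun i hi => ?_⟩
    simp only
    rw [dif_pos (by omega : i < k + 2)]
  refine measure_mono_null hsub (measure_iUnion_null fun k => measure_iUnion_null fun v => key _ _)

end NullBad

lemma one_sub_pow_le_nat_mul {γ : ℝ} (h0 : 0 ≤ γ) (h1 : γ ≤ 1) (n : ℕ) :
    1 - γ ^ n ≤ n * (1 - γ) := by
  induction n with
  | zero => simp
  | succ n ih =>
    have hp : γ ^ n ≤ 1 := pow_le_one₀ h0 h1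
    have hp0 : 0 ≤ γ ^ n := pow_nonneg h0 n
    rw [pow_succ]
    push_cast
    nlinarith

/-- for every `ε > 0` there is a threshold `γ' ∈ (0,1)` such that for all
discount factors `γ ∈ (γ', 1)`, all states and all policies,
`0 ≤ V^γ_π(s) - rn * μ^π_s(Safeᶜ) < ε`. -/
theorem value_close_to_rn_mul_unsafe_prob
    [Fintype S] [Nonempty S] [MeasurableSpace S] [MeasurableSingletonClass S]
    [∀ s, Fintype (A s)] [∀ s, Nonempty (A s)]
    (P : (s : S) → A s → PMF S) (Acc : Set S)
    (habs : ∀ s ∈ Acc, ∀ a : A s, (P s a).support ⊆ Acc)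
    (μ : ((s : S) → A s) → S → Measure (ℕ → S))
    (hμ : ∀ π : (s : S) → A s, IsPathMeasure (fun s => P s (π s)) (μ π))
    (rn γacc : ℝ) (hrn : rn < 0) (hγacc : 0 < γacc ∧ γacc < 1) :
    ∀ ε : ℝ, 0 < ε → ∃ γ' : ℝ, 0 < γ' ∧ γ' < 1 ∧
      ∀ γ : ℝ, γ' < γ → γ < 1 → ∀ (s : S) (π : (s : S) → A s),
        0 ≤ Valp Acc γacc γ rn μ π s -
            rn * (μ π s {ω | ∀ t, ω t ∉ Acc}ᶜ).toReal ∧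
          Valp Acc γacc γ rn μ π s -
            rn * (μ π s {ω | ∀ t, ω t ∉ Acc}ᶜ).toReal < ε := by
  intro ε hε
  obtain ⟨hacc0, hacc1⟩ := hγacc
  have hK : (0 : ℝ) < -rn := by linarith
  set δ : ℝ := ε / (2 * -rn) with hδdef
  have hδ : 0 < δ := by positivity
  have hAccM : MeasurableSet Acc := Acc.toFinite.measurableSet
  have hSafeM : MeasurableSet {ω : ℕ → S | ∀ t, ω t ∉ Acc} := by
    rw [Set.setOf_forall]
    refine MeasurableSet.iInter (fun t => ?_)
    have he : {x : ℕ → S | x t ∉ Acc} = (fun x : ℕ → S => x t) ⁻¹' Accᶜ := rfl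
    rw [he]
    exact measurable_pi_apply t hAccM.compl
  set E : ℕ → Set (ℕ → S) := fun N => {ω | (∃ t, ω t ∈ Acc) ∧ ∀ t < N, ω (t + 1) ∉ Acc}
    with hEdef
  have hEM : ∀ N, MeasurableSet (E N) := by
    intro N
    have h1 : MeasurableSet {ω : ℕ → S | ∃ t, ω t ∈ Acc} := by
      rw [Set.setOf_exists]
      exact MeasurableSet.iUnion (fun t => (measurable_pi_apply t) hAccM)
    have h2 : MeasurableSet {ω : ℕ → S | ∀ t < N, ω (t + 1) ∉ Acc} := by
      rw [Set.setOf_forall]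
      refine MeasurableSet.iInter (fun t => ?_)
      rw [Set.setOf_forall]
      refine MeasurableSet.iInter (fun _ => ?_)
      have he : {x : ℕ → S | x (t + 1) ∉ Acc} = (fun x : ℕ → S => x (t + 1)) ⁻¹' Accᶜ := rfl
      rw [he]
      exact measurable_pi_apply (t + 1) hAccM.compl
    exact h1.inter h2
  have hEanti : Antitone E := by
    intro M N hMN ω hω
    exact ⟨hω.1, fun t ht => hω.2 t (lt_of_lt_of_le ht hMN)⟩
  have hEN : ∀ (π : (s : S) → A s) (s : S),
      Filter.Tendsto (fun N => μ π s (E N)) Filter.atTop (nhds 0) := by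
    intro π s
    haveI := (hμ π).1 s
    have hiInter : μ π s (⋂ N, E N) = 0 := by
      refine measure_mono_null ?_ (bad_null P Acc habs μ hμ π s)
      intro ω hω
      simp only [Set.mem_iInter] at hω
      have h2 : ∀ u : ℕ, ω (u + 1) ∉ Acc := fun u => (hω (u + 1)).2 u (by omega)
      obtain ⟨t, ht⟩ := (hω 1).1
      refine ⟨0, ?_, h2 0⟩
      cases t with
      | zero => exact ht
      | succ u => exact absurd ht (h2 u)
    have htend := tendsto_measure_iInter_atTop (μ := μ π s)
      (fun N => (hEM N).nullMeasurableSet) hEanti ⟨0, measure_ne_top _ _⟩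
    rw [hiInter] at htend
    exact htend
  have hch : ∀ p : ((s : S) → A s) × S, ∃ N : ℕ, μ p.1 p.2 (E N) < ENNReal.ofReal δ := by
    intro p
    exact ((hEN p.1 p.2).eventually_lt_const
      (by simp [ENNReal.ofReal_pos, hδ])).exists
  choose Nf hNf using hch
  set N0 : ℕ := Finset.univ.sup Nf with hN0
  have hEN0 : ∀ (π : (s : S) → A s) (s : S), μ π s (E N0) < ENNReal.ofReal δ := by
    intro π s
    exact lt_of_le_of_lt
      (measure_mono (hEanti (Finset.le_sup (Finset.mem_univ (π, s))))) (hNf (π, s))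
  refine ⟨max (1 / 2) (1 - δ / (N0 + 1)), lt_of_lt_of_le (by norm_num) (le_max_left _ _),
    max_lt (by norm_num) (by
      have : 0 < δ / (N0 + 1) := by positivity
      linarith), ?_⟩
  intro γ hγ'γ hγ1 s π
  have hγhalf : (1 : ℝ) / 2 < γ := lt_of_le_of_lt (le_max_left _ _) hγ'γ
  have hγ0 : (0 : ℝ) ≤ γ := by linarith
  have hpow : 1 - γ ^ N0 < δ := by
    have h1 : 1 - δ / (N0 + 1) < γ := lt_of_le_of_lt (le_max_right _ _) hγ'γ
    have h2 : 1 - γ ^ N0 ≤ N0 * (1 - γ) := one_sub_pow_le_nat_mul hγ0 hγ1.le N0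
    have h3 : (N0 : ℝ) * (1 - γ) ≤ N0 * (δ / (N0 + 1)) := by
      apply mul_le_mul_of_nonneg_left (by linarith) (Nat.cast_nonneg N0)
    have h4 : (N0 : ℝ) * (δ / (N0 + 1)) < δ := by
      rw [mul_div_assoc']
      rw [div_lt_iff₀ (by positivity)]
      nlinarith [Nat.cast_nonneg (α := ℝ) N0]
    linarith
  haveI := (hμ π).1 s
  have hgood_ae : ∀ᵐ ω ∂(μ π s), ∀ k, ω k ∈ Acc → ω (k + 1) ∈ Acc := by
    rw [MeasureTheory.ae_iff]
    refine measure_mono_null ?_ (bad_null P Acc habs μ hμ π s)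
    intro ω hω
    simp only [Set.mem_setOf_eq] at hω ⊢
    push_neg at hω
    exact hω
  set ind : (ℕ → S) → ℝ := ({ω : ℕ → S | ∀ t, ω t ∉ Acc}ᶜ).indicator (fun _ => rn) with hind
  set Bd : (ℕ → S) → ℝ :=
    fun ω => (-rn) * (1 - γ ^ N0) + (E N0).indicator (fun _ => -rn) ω with hBd
  have hRetInt : Integrable (Ret Acc γacc γ rn) (μ π s) := by
    refine Integrable.mono' (integrable_const (((1 - γacc) * |rn|) * (1 - max γ γacc)⁻¹))
      ((measurable_Ret hacc0.le hacc1 hγ0 hγ1).aestronglyMeasurable)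
      (Filter.Eventually.of_forall (norm_Ret_le hacc0.le hacc1 hγ0 hγ1))
  have hindInt : Integrable ind (μ π s) := (integrable_const rn).indicator hSafeM.compl
  have hBdInt : Integrable Bd (μ π s) :=
    (integrable_const _).add ((integrable_const (-rn)).indicator (hEM N0))
  have hval : Valp Acc γacc γ rn μ π s - rn * (μ π s {ω | ∀ t, ω t ∉ Acc}ᶜ).toReal =
      ∫ ω, (Ret Acc γacc γ rn ω - ind ω) ∂(μ π s) := by
    rw [integral_sub hRetInt hindInt]
    have h2 : ∫ ω, ind ω ∂(μ π s) = rn * (μ π s {ω | ∀ t, ω t ∉ Acc}ᶜ).toReal := by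
      rw [hind, integral_indicator_const rn hSafeM.compl, smul_eq_mul, mul_comm, measureReal_def]
    rw [h2]
    rfl
  have hpt : ∀ᵐ ω ∂(μ π s), 0 ≤ Ret Acc γacc γ rn ω - ind ω ∧
      Ret Acc γacc γ rn ω - ind ω ≤ Bd ω := by
    filter_upwards [hgood_ae] with ω hgood
    have hBd0 : 0 ≤ (-rn) * (1 - γ ^ N0) :=
      mul_nonneg (by linarith) (by nlinarith [pow_le_one₀ hγ0 hγ1.le (n := N0)])
    have hind0 : 0 ≤ (E N0).indicator (fun _ => -rn) ω :=
      Set.indicator_nonneg (fun _ _ => by linarith) ω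
    by_cases hω : ∀ t, ω t ∉ Acc
    · have h0 : Ret Acc γacc γ rn ω = 0 := Ret_eq_zero_of_safe hω
      have hi : ind ω = 0 := by
        rw [hind, Set.indicator_of_notMem]
        simpa using hω
      rw [h0, hi, hBd]
      constructor
      · norm_num
      · simp only [sub_zero]
        linarith
    · push_neg at hω
      obtain ⟨t, ht⟩ := hω
      have h' : ∃ u, ω (u + 1) ∈ Acc := by
        cases t with
        | zero => exact ⟨0, hgood 0 ht⟩
        | succ u => exact ⟨u, ht⟩
      have hret : Ret Acc γacc γ rn ω = rn * γ ^ (Nat.find h') :=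
        Ret_eq_of_unsafe hacc0 hacc1 hγ0 hγ1 hgood h'
      have hi : ind ω = rn := by
        have hmem : ω ∈ {ω : ℕ → S | ∀ t, ω t ∉ Acc}ᶜ := by
          simp only [Set.mem_compl_iff, Set.mem_setOf_eq]
          push_neg
          exact ⟨t, ht⟩
        rw [hind, Set.indicator_of_mem hmem]
      set T := Nat.find h' with hT
      have hTpow : γ ^ T ≤ 1 := pow_le_one₀ hγ0 hγ1.le
      have hTpow0 : 0 ≤ γ ^ T := pow_nonneg hγ0 T
      constructor
      · rw [hret, hi]
        nlinarith
      · rw [hret, hi, hBd]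
        show rn * γ ^ T - rn ≤ -rn * (1 - γ ^ N0) + (E N0).indicator (fun _ => -rn) ω
        by_cases hTN : N0 ≤ T
        · have hmem : ω ∈ E N0 :=
            ⟨⟨t, ht⟩, fun u hu => Nat.find_min h' (lt_of_lt_of_le hu hTN)⟩
          rw [Set.indicator_of_mem hmem]
          have h2 : γ ^ N0 ≤ 1 := pow_le_one₀ hγ0 hγ1.le
          nlinarith
        · push_neg at hTN
          have hmono : γ ^ N0 ≤ γ ^ T :=
            pow_le_pow_of_le_one hγ0 hγ1.le (le_of_lt hTN)
          nlinarith
  have hlow : 0 ≤ ∫ ω, (Ret Acc γacc γ rn ω - ind ω) ∂(μ π s) :=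
    integral_nonneg_of_ae (hpt.mono fun ω h => h.1)
  have hup : ∫ ω, (Ret Acc γacc γ rn ω - ind ω) ∂(μ π s) ≤ ∫ ω, Bd ω ∂(μ π s) :=
    integral_mono_ae (hRetInt.sub hindInt) hBdInt (hpt.mono fun ω h => h.2)
  have hBdval : ∫ ω, Bd ω ∂(μ π s) =
      (-rn) * (1 - γ ^ N0) + (-rn) * (μ π s (E N0)).toReal := by
    rw [hBd, integral_add (integrable_const _) ((integrable_const (-rn)).indicator (hEM N0)),
      integral_const, integral_indicator_const _ (hEM N0), probReal_univ,
      one_smul, smul_eq_mul, measureReal_def]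
    ring
  have hEtoReal : (μ π s (E N0)).toReal < δ := ENNReal.toReal_lt_of_lt_ofReal (hEN0 π s)
  have hfinal : ∫ ω, Bd ω ∂(μ π s) < ε := by
    rw [hBdval]
    have h1 : (-rn) * (1 - γ ^ N0) < (-rn) * δ := by
      exact mul_lt_mul_of_pos_left hpow hK
    have h2 : (-rn) * (μ π s (E N0)).toReal < (-rn) * δ := by
      exact mul_lt_mul_of_pos_left hEtoReal hK
    have h3 : (-rn) * δ = ε / 2 := by
      have hrn' : rn ≠ 0 := ne_of_lt hrn
      rw [hδdef]
      field_simp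
    linarith
  exact ⟨by rw [hval]; exact hlow, by rw [hval]; exact lt_of_le_of_lt hup hfinal⟩
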